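/- For nonnegative integers l, t with 2l ≤ t, the maximum possible number of embeddings of a single longest common subsequence of length l in two sequences of total length t equals C(t−l, l). In particular, max over m+n=t, y ≤ l of C(m−y, l−y)·C(n+y−l, y) = C(t−l, l), using the Vandermonde-type inequality C(r,k)·C(r',k') ≤ C(r+r', k+k'). -/

import Mathlib

/-- `C` is a longest common subsequence of `A` and `B`. -/
def IsLCS {α : Type*} (A B C : List α) : Prop :=
  C.Sublist A ∧ C.Sublist B ∧ ∀ D : List α, D.Sublist A → D.Sublist B → D.length ≤ C.length

/-- The number of embeddings of the string `C` as a common subsequence of `A` and `B`: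
pairs of strictly increasing position sequences matching the characters of `C`. -/
noncomputable def EmbCount {α : Type*} (A B C : List α) : ℕ :=
  Nat.card {pq : (Fin C.length → Fin A.length) × (Fin C.length → Fin B.length) //
    StrictMono pq.1 ∧ StrictMono pq.2 ∧
      ∀ i, A.get (pq.1 i) = C.get i ∧ B.get (pq.2 i) = C.get i}

lemma sm_add_le_nat {k n : ℕ} {f : Fin k → Fin n} (hf : StrictMono f) :
    ∀ (b a : ℕ) (hb : b < k) (hab : a ≤ b),
      (f ⟨a, lt_of_le_of_lt hab hb⟩ : ℕ) + (b - a) ≤ f ⟨b, hb⟩ := by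
  intro b
  induction b with
  | zero =>
    intro a hb hab
    interval_cases a
    simp
  | succ b ih =>
    intro a hb hab
    rcases Nat.eq_or_lt_of_le hab with hh | hh
    · subst hh; simp
    · have hab' : a ≤ b := by omega
      have h1 := ih a (by omega) hab'
      have h2 : (f ⟨b, by omega⟩ : ℕ) < f ⟨b + 1, hb⟩ := hf (by simp [Fin.lt_def])
      omega

lemma sm_add_le {k n : ℕ} {f : Fin k → Fin n} (hf : StrictMono f) (a b : Fin k)
    (hab : a ≤ b) : (f a : ℕ) + ((b : ℕ) - a) ≤ f b := by
  have := sm_add_le_nat hf b.1 a.1 b.2 hab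
  simpa using this

lemma ofFn_get_sublist {α : Type*} (A : List α) {k : ℕ} {f : Fin k → Fin A.length}
    (hf : StrictMono f) : List.Sublist (List.ofFn fun j => A.get (f j)) A := by
  rw [List.sublist_iff_exists_fin_orderEmbedding_get_eq]
  have hlen : (List.ofFn fun j => A.get (f j)).length = k := List.length_ofFn
  refine ⟨OrderEmbedding.ofStrictMono (fun ix => f (Fin.cast hlen ix))
    (hf.comp fun a b hab => hab), ?_⟩
  intro ix
  simp only [List.get_ofFn, OrderEmbedding.coe_ofStrictMono]

lemma card_strictMono (k n : ℕ) :
    Nat.card {f : Fin k → Fin n // StrictMono f} = n.choose k := by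
  have e : {f : Fin k → Fin n // StrictMono f} ≃ {s : Finset (Fin n) // s.card = k} :=
    { toFun := fun f => ⟨Finset.univ.image f.1, by
        rw [Finset.card_image_of_injective _ f.2.injective, Finset.card_univ,
          Fintype.card_fin]⟩
      invFun := fun s => ⟨s.1.orderEmbOfFin s.2, (s.1.orderEmbOfFin s.2).strictMono⟩
      left_inv := fun f => by
        apply Subtype.ext
        exact (Finset.orderEmbOfFin_unique _
          (fun x => Finset.mem_image_of_mem _ (Finset.mem_univ x)) f.2).symm
      right_inv := fun s => by
        apply Subtype.ext
        rw [← Finset.coe_inj, Finset.coe_image, Finset.coe_univ, Set.image_univ]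
        exact Finset.range_orderEmbOfFin s.1 s.2 }
  rw [Nat.card_congr e, Nat.card_eq_fintype_card, Fintype.card_finset_len, Fintype.card_fin]

lemma isLCS_no_cross {α : Type*} {A B C : List α} (hlcs : IsLCS A B C)
    {p p' : Fin C.length → Fin A.length} {q q' : Fin C.length → Fin B.length}
    (hp : StrictMono p) (hp' : StrictMono p') (hq : StrictMono q) (hq' : StrictMono q')
    (hpA : ∀ i, A.get (p i) = C.get i) (hp'A : ∀ i, A.get (p' i) = C.get i)
    (hqB : ∀ i, B.get (q i) = C.get i) (hq'B : ∀ i, B.get (q' i) = C.get i)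
    (i : Fin C.length) (h1 : p i < p' i) (h2 : q' i < q i) : False := by
  have hil : (i : ℕ) < C.length := i.2
  have hj1 : ∀ j : Fin (C.length + 1), (j : ℕ) ≤ i → (j : ℕ) < C.length := fun j hj => lt_of_le_of_lt hj hil
  have hj2 : ∀ j : Fin (C.length + 1), ¬(j : ℕ) ≤ i → (j : ℕ) - 1 < C.length := fun j hj => by
    have := j.2; omega
  let fA : Fin (C.length + 1) → Fin A.length := fun j =>
    if hj : (j : ℕ) ≤ i then p ⟨j, hj1 j hj⟩ else p' ⟨(j : ℕ) - 1, hj2 j hj⟩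
  let fB : Fin (C.length + 1) → Fin B.length := fun j =>
    if hj : (j : ℕ) ≤ i then q' ⟨j, hj1 j hj⟩ else q ⟨(j : ℕ) - 1, hj2 j hj⟩
  have hfA : StrictMono fA := by
    intro a b hab
    have hab' : (a : ℕ) < b := hab
    simp only [fA]
    split_ifs with ha hb hb
    · exact hp (Fin.mk_lt_mk.mpr hab')
    · refine lt_of_le_of_lt (hp.monotone (show (⟨a, hj1 a ha⟩ : Fin C.length) ≤ i from ha)) ?_
      refine lt_of_lt_of_le h1 (hp'.monotone ?_)
      show (i : ℕ) ≤ (b : ℕ) - 1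
      omega
    · exact absurd (lt_of_lt_of_le hab' hb) (by omega)
    · exact hp' (Fin.mk_lt_mk.mpr (by omega))
  have hfB : StrictMono fB := by
    intro a b hab
    have hab' : (a : ℕ) < b := hab
    simp only [fB]
    split_ifs with ha hb hb
    · exact hq' (Fin.mk_lt_mk.mpr hab')
    · refine lt_of_le_of_lt (hq'.monotone (show (⟨a, hj1 a ha⟩ : Fin C.length) ≤ i from ha)) ?_
      refine lt_of_lt_of_le h2 (hq.monotone ?_)
      show (i : ℕ) ≤ (b : ℕ) - 1
      omega
    · exact absurd (lt_of_lt_of_le hab' hb) (by omega)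
    · exact hq (Fin.mk_lt_mk.mpr (by omega))
  have hDeq : ∀ j, A.get (fA j) = B.get (fB j) := by
    intro j
    simp only [fA, fB]
    split_ifs with hj
    · rw [hpA, hq'B]
    · rw [hp'A, hqB]
  have hDA := ofFn_get_sublist A hfA
  have hDB : List.Sublist (List.ofFn fun j => A.get (fA j)) B := by
    have : (List.ofFn fun j => A.get (fA j)) = List.ofFn fun j => B.get (fB j) := by
      congr 1; funext j; exact hDeq j
    rw [this]; exact ofFn_get_sublist B hfB
  have hle := hlcs.2.2 _ hDA hDB
  rw [List.length_ofFn] at hle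
  omega

lemma combo_le_self {k n : ℕ} {f : Fin k → Fin n} (hf : StrictMono f) (i : Fin k) :
    (i : ℕ) ≤ f i := by
  have h0 : (⟨0, i.pos⟩ : Fin k) ≤ i := by rw [Fin.le_def]; simp
  have := sm_add_le hf ⟨0, i.pos⟩ i h0
  simp only [Fin.val_mk] at this
  omega

lemma combo_bound {m n l : ℕ} {p : Fin l → Fin m} {q : Fin l → Fin n}
    (hp : StrictMono p) (hq : StrictMono q) (i : Fin l) :
    (p i : ℕ) + (q i : ℕ) - (i : ℕ) < m + n - l := by
  have hl : 0 < l := i.pos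
  have h5 : (i : ℕ) < l := i.2
  set last : Fin l := ⟨l - 1, by omega⟩ with hlastdef
  have hlv : (last : ℕ) = l - 1 := rfl
  have hile : i ≤ last := by rw [Fin.le_def, hlv]; omega
  have h1 := sm_add_le hp i last hile
  have h2 := sm_add_le hq i last hile
  have h3 : (p last : ℕ) < m := (p last).2
  have h4 : (q last : ℕ) < n := (q last).2
  have h6 := combo_le_self hp i
  have h7 := combo_le_self hq i
  rw [hlv] at h1 h2
  omega

lemma combo_mono {m n l : ℕ} {p : Fin l → Fin m} {q : Fin l → Fin n}
    (hp : StrictMono p) (hq : StrictMono q) :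
    StrictMono (fun i : Fin l =>
      (⟨(p i : ℕ) + (q i : ℕ) - (i : ℕ), combo_bound hp hq i⟩ : Fin (m + n - l))) := by
  intro i j hij
  have hij' : (i : ℕ) < j := hij
  have h1 := sm_add_le hp i j (le_of_lt hij)
  have h2 := sm_add_le hq i j (le_of_lt hij)
  have h3 := combo_le_self hp i
  have h4 := combo_le_self hq i
  rw [Fin.mk_lt_mk]
  omega

lemma embCount_le {α : Type*} {A B C : List α} (hlcs : IsLCS A B C) :
    EmbCount A B C ≤ Nat.choose (A.length + B.length - C.length) C.length := by
  rw [← card_strictMono C.length (A.length + B.length - C.length), EmbCount]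
  apply Nat.card_le_card_of_injective
    (fun x : {pq : (Fin C.length → Fin A.length) × (Fin C.length → Fin B.length) //
        StrictMono pq.1 ∧ StrictMono pq.2 ∧
          ∀ i, A.get (pq.1 i) = C.get i ∧ B.get (pq.2 i) = C.get i} =>
      (⟨fun i => ⟨(x.1.1 i : ℕ) + (x.1.2 i : ℕ) - (i : ℕ), combo_bound x.2.1 x.2.2.1 i⟩,
        combo_mono x.2.1 x.2.2.1⟩ :
        {f : Fin C.length → Fin (A.length + B.length - C.length) // StrictMono f}))
  rintro ⟨⟨p, q⟩, hp, hq, hpq⟩ ⟨⟨p', q'⟩, hp', hq', hpq'⟩ hxy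
  dsimp only at hp hq hpq hp' hq' hpq'
  have h := Subtype.ext_iff.mp hxy
  have hsum : ∀ i : Fin C.length, (p i : ℕ) + (q i : ℕ) = (p' i : ℕ) + (q' i : ℕ) := by
    intro i
    have h2 : (p i : ℕ) + (q i : ℕ) - (i : ℕ) = (p' i : ℕ) + (q' i : ℕ) - (i : ℕ) :=
      congrArg Fin.val (congrFun h i)
    have h3 := combo_le_self hp i
    have h4 := combo_le_self hq i
    have h5 := combo_le_self hp' i
    have h6 := combo_le_self hq' i
    omega
  have hpe : ∀ i, p i = p' i ∧ q i = q' i := by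
    intro i
    rcases lt_trichotomy (p i) (p' i) with hlt | heq | hgt
    · exact (isLCS_no_cross hlcs hp hp' hq hq' (fun j => (hpq j).1) (fun j => (hpq' j).1)
        (fun j => (hpq j).2) (fun j => (hpq' j).2) i hlt
        (by rw [Fin.lt_def]; have := hsum i; have := Fin.lt_def.mp hlt; omega)).elim
    · refine ⟨heq, Fin.ext ?_⟩
      have := hsum i
      have := Fin.val_eq_of_eq heq
      omega
    · exact (isLCS_no_cross hlcs hp' hp hq' hq (fun j => (hpq' j).1) (fun j => (hpq j).1)
        (fun j => (hpq' j).2) (fun j => (hpq j).2) i hgt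
        (by rw [Fin.lt_def]; have := hsum i; have := Fin.lt_def.mp hgt; omega)).elim
  exact Subtype.ext (Prod.ext_iff.mpr
    ⟨funext fun i => (hpe i).1, funext fun i => (hpe i).2⟩)

lemma embCount_eq_mul {α : Type*} (A B C : List α)
    (hA : ∀ (i : Fin A.length) (j : Fin C.length), A.get i = C.get j)
    (hB : ∀ (i : Fin B.length) (j : Fin C.length), B.get i = C.get j) :
    EmbCount A B C = Nat.choose A.length C.length * Nat.choose B.length C.length := by
  rw [EmbCount]
  have e : {pq : (Fin C.length → Fin A.length) × (Fin C.length → Fin B.length) //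
      StrictMono pq.1 ∧ StrictMono pq.2 ∧
        ∀ i, A.get (pq.1 i) = C.get i ∧ B.get (pq.2 i) = C.get i} ≃
      {p : Fin C.length → Fin A.length // StrictMono p} ×
        {q : Fin C.length → Fin B.length // StrictMono q} :=
    { toFun := fun x => (⟨x.1.1, x.2.1⟩, ⟨x.1.2, x.2.2.1⟩)
      invFun := fun y => ⟨(y.1.1, y.2.1), y.1.2, y.2.2, fun i => ⟨hA _ _, hB _ _⟩⟩
      left_inv := fun x => rfl
      right_inv := fun y => rfl }
  rw [Nat.card_congr e, Nat.card_prod, card_strictMono, card_strictMono]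

lemma vander_le (r k r' k' : ℕ) :
    Nat.choose r k * Nat.choose r' k' ≤ Nat.choose (r + r') (k + k') := by
  rw [Nat.add_choose_eq]
  exact Finset.single_le_sum (f := fun ij : ℕ × ℕ => r.choose ij.1 * r'.choose ij.2)
    (fun _ _ => Nat.zero_le _) (by simp : ((k, k') : ℕ × ℕ) ∈ Finset.HasAntidiagonal.antidiagonal (k + k'))

theorem stmt16 (t l : ℕ) (h : 2 * l ≤ t) :
    IsGreatest {e : ℕ | ∃ (α : Type) (A B C : List α),
        A.length + B.length = t ∧ C.length = l ∧ IsLCS A B C ∧ e = EmbCount A B C}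
      (Nat.choose (t - l) l) ∧
      ((Finset.Icc l (t - l)).sup fun m => (Finset.range (l + 1)).sup fun y =>
          Nat.choose (m - y) (l - y) * Nat.choose (t - m + y - l) y) = Nat.choose (t - l) l ∧
      ∀ r k r' k' : ℕ,
        Nat.choose r k * Nat.choose r' k' ≤ Nat.choose (r + r') (k + k') := by
  refine ⟨⟨?_, ?_⟩, ?_, fun r k r' k' => vander_le r k r' k'⟩
  · -- membership
    refine ⟨Unit, List.replicate l (), List.replicate (t - l) (), List.replicate l (),
      ?_, ?_, ⟨?_, ?_, ?_⟩, ?_⟩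
    · simp; omega
    · simp
    · exact List.Sublist.refl _
    · exact (List.replicate_sublist_replicate _).mpr (by omega)
    · intro D hDA _
      have := hDA.length_le
      simpa using this
    · rw [embCount_eq_mul _ _ _ (fun i j => Subsingleton.elim _ _)
        (fun i j => Subsingleton.elim _ _)]
      simp [Nat.choose_self]
  · -- upper bound
    rintro e ⟨α, A, B, C, hT, hC, hlcs, rfl⟩
    have := embCount_le hlcs
    rwa [hC, hT] at this
  · -- sup identity
    apply le_antisymm
    · apply Finset.sup_le
      intro m hm
      apply Finset.sup_le
      intro y hy
      simp only [Finset.mem_Icc] at hm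
      simp only [Finset.mem_range] at hy
      calc Nat.choose (m - y) (l - y) * Nat.choose (t - m + y - l) y
          ≤ Nat.choose ((m - y) + (t - m + y - l)) ((l - y) + y) := vander_le _ _ _ _
        _ = Nat.choose (t - l) l := by congr 1 <;> omega
    · have h1 : Nat.choose (t - l) l =
          Nat.choose (l - l) (l - l) * Nat.choose (t - l + l - l) l := by
        have : t - l + l - l = t - l := by omega
        rw [this]
        simp
      have hmem : l ∈ Finset.Icc l (t - l) := Finset.mem_Icc.mpr ⟨le_refl l, by omega⟩
      rw [h1]
      calc Nat.choose (l - l) (l - l) * Nat.choose (t - l + l - l) l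
          ≤ (Finset.range (l + 1)).sup
              (fun y => Nat.choose (l - y) (l - y) * Nat.choose (t - l + y - l) y) :=
            Finset.le_sup (f := fun y => Nat.choose (l - y) (l - y) *
              Nat.choose (t - l + y - l) y) (Finset.self_mem_range_succ l)
        _ ≤ (Finset.Icc l (t - l)).sup (fun m => (Finset.range (l + 1)).sup fun y =>
              Nat.choose (m - y) (l - y) * Nat.choose (t - m + y - l) y) :=
            Finset.le_sup (f := fun m => (Finset.range (l + 1)).sup fun y =>
              Nat.choose (m - y) (l - y) * Nat.choose (t - m + y - l) y) hmem
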